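/- Let G be a countable group, λ a left order on G, and x₀ ∈ ℝ. If ρ and ρ' are two homomorphisms G → Homeo₊(ℝ) which are both tight at x₀ and both realize λ at x₀, then there is an orientation-preserving homeomorphism h of ℝ with h(x₀) = x₀ such that h ∘ ρ(g) = ρ'(g) ∘ h for every g ∈ G. -/

import Mathlib

/-- A left-invariant strict total order on a group `G`. -/
structure LeftOrder (G : Type*) [Group G] where
  lt : G → G → Prop
  irrefl : ∀ g, ¬ lt g g
  trans : ∀ f g h, lt f g → lt g h → lt f h
  total : ∀ f g, f ≠ g → lt f g ∨ lt g f
  mul_left : ∀ f g h, lt f g → lt (h * f) (h * g)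

/-- The orbit of the base point `x₀` under an action of `G` on `ℝ`.
An orientation-preserving homeomorphism of `ℝ` is the same thing as a strictly
monotone (increasing) bijection `ℝ → ℝ`, so actions by orientation-preserving
homeomorphisms are encoded as homomorphisms `G →* Equiv.Perm ℝ` all of whose
values are strictly monotone. -/
def orbitSet {G : Type*} [Group G] (rho : G →* Equiv.Perm ℝ) (x₀ : ℝ) : Set ℝ :=
  Set.range fun g : G => rho g x₀

/-- `rho` is tight at `x₀`: (1) the stabilizer of `x₀` is trivial, (2) the orbit of `x₀`
is unbounded below and above, and (3) whenever the closure of the orbit meets `[a,b]`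
exactly in `{a,b}` (with `a < b`), both `a` and `b` belong to the orbit. -/
def IsTightAt {G : Type*} [Group G] (rho : G →* Equiv.Perm ℝ) (x₀ : ℝ) : Prop :=
  (∀ g : G, rho g x₀ = x₀ → g = 1) ∧
  ¬ BddBelow (orbitSet rho x₀) ∧ ¬ BddAbove (orbitSet rho x₀) ∧
  ∀ a b : ℝ, a < b → closure (orbitSet rho x₀) ∩ Set.Icc a b = {a, b} →
    a ∈ orbitSet rho x₀ ∧ b ∈ orbitSet rho x₀

/-- `rho` realizes the left order `lam` at the base point `x₀`. -/
def RealizesAt {G : Type*} [Group G] (rho : G →* Equiv.Perm ℝ) (x₀ : ℝ)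
    (lam : LeftOrder G) : Prop :=
  ∀ f g : G, lam.lt f g ↔ rho f x₀ < rho g x₀

namespace DynRealAux
open Set Function

variable {G : Type*} [Group G]

/-- bundled symmetric hypotheses -/
structure Good (rho rho' : G →* Equiv.Perm ℝ) (x₀ : ℝ) : Prop where
  hm : ∀ g : G, StrictMono ⇑(rho g)
  hm' : ∀ g : G, StrictMono ⇑(rho' g)
  hbb : ¬ BddBelow (orbitSet rho x₀)
  hba : ¬ BddAbove (orbitSet rho x₀)
  hbb' : ¬ BddBelow (orbitSet rho' x₀)
  hba' : ¬ BddAbove (orbitSet rho' x₀)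
  ht3 : ∀ a b : ℝ, a < b → closure (orbitSet rho x₀) ∩ Set.Icc a b = {a, b} →
    a ∈ orbitSet rho x₀ ∧ b ∈ orbitSet rho x₀
  ht3' : ∀ a b : ℝ, a < b → closure (orbitSet rho' x₀) ∩ Set.Icc a b = {a, b} →
    a ∈ orbitSet rho' x₀ ∧ b ∈ orbitSet rho' x₀
  hpq : ∀ f g : G, rho f x₀ ≤ rho g x₀ ↔ rho' f x₀ ≤ rho' g x₀
  hpinj : Function.Injective fun g : G => rho g x₀
  hqinj : Function.Injective fun g : G => rho' g x₀

variable {rho rho' : G →* Equiv.Perm ℝ} {x₀ : ℝ}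

lemma Good.symm (H : Good rho rho' x₀) : Good rho' rho x₀ :=
  ⟨H.hm', H.hm, H.hbb', H.hba', H.hbb, H.hba, H.ht3', H.ht3,
   fun f g => (H.hpq f g).symm, H.hqinj, H.hpinj⟩

lemma Good.lt_iff (H : Good rho rho' x₀) (f g : G) :
    rho f x₀ < rho g x₀ ↔ rho' f x₀ < rho' g x₀ :=
  lt_iff_lt_of_le_iff_le (H.hpq g f)

lemma exists_orbit_lt (H : Good rho rho' x₀) (x : ℝ) : ∃ g : G, rho g x₀ < x := by
  obtain ⟨y, hy, hlt⟩ := not_bddBelow_iff.mp H.hbb x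
  obtain ⟨g, rfl⟩ := hy
  exact ⟨g, hlt⟩

lemma exists_orbit_gt (H : Good rho rho' x₀) (x : ℝ) : ∃ g : G, x < rho g x₀ := by
  obtain ⟨y, hy, hlt⟩ := not_bddAbove_iff.mp H.hba x
  obtain ⟨g, rfl⟩ := hy
  exact ⟨g, hlt⟩

/-- the order iso attached to `rho g` -/
def oIso (rho : G →* Equiv.Perm ℝ) (hm : ∀ g : G, StrictMono ⇑(rho g)) (g : G) : ℝ ≃o ℝ :=
  ⟨rho g, (hm g).le_iff_le⟩

lemma rho_inv_apply (rho : G →* Equiv.Perm ℝ) (g : G) (x : ℝ) :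
    rho g⁻¹ (rho g x) = x := by
  rw [map_inv]; exact Equiv.symm_apply_apply _ _

lemma rho_apply_inv (rho : G →* Equiv.Perm ℝ) (g : G) (x : ℝ) :
    rho g (rho g⁻¹ x) = x := by
  rw [map_inv]; exact Equiv.apply_symm_apply _ _

lemma rho_mul_apply (rho : G →* Equiv.Perm ℝ) (g f : G) (x : ℝ) :
    rho (g * f) x = rho g (rho f x) := by
  rw [map_mul]; rfl

lemma image_orbit (rho : G →* Equiv.Perm ℝ) (x₀ : ℝ) (g : G) :
    (rho g) '' (orbitSet rho x₀) = orbitSet rho x₀ := by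
  ext y
  constructor
  · rintro ⟨-, ⟨f, rfl⟩, rfl⟩
    exact ⟨g * f, by simp only []; rw [rho_mul_apply]⟩
  · rintro ⟨f, rfl⟩
    exact ⟨rho (g⁻¹ * f) x₀, ⟨g⁻¹ * f, rfl⟩, by
      rw [← rho_mul_apply, ← mul_assoc, mul_inv_cancel, one_mul]⟩

lemma image_closure_orbit (H : Good rho rho' x₀) (g : G) :
    (rho g) '' closure (orbitSet rho x₀) = closure (orbitSet rho x₀) := by
  have := (oIso rho H.hm g).toHomeomorph.image_closure (orbitSet rho x₀)
  have h2 : ⇑(oIso rho H.hm g).toHomeomorph = ⇑(rho g) := rfl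
  rw [h2] at this
  rw [this, image_orbit]

lemma mem_closure_iff_apply (H : Good rho rho' x₀) (g : G) (x : ℝ) :
    rho g x ∈ closure (orbitSet rho x₀) ↔ x ∈ closure (orbitSet rho x₀) := by
  constructor
  · intro hx
    have : rho g⁻¹ (rho g x) ∈ closure (orbitSet rho x₀) := by
      rw [← image_closure_orbit H g⁻¹]; exact ⟨_, hx, rfl⟩
    rwa [rho_inv_apply] at this
  · intro hx
    rw [← image_closure_orbit H g]; exact ⟨_, hx, rfl⟩

lemma closure_inter_open_empty {S U : Set ℝ} (hU : IsOpen U) (h : S ∩ U = ∅) :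
    closure S ∩ U = ∅ := by
  ext z
  simp only [mem_inter_iff, mem_empty_iff_false, iff_false, not_and]
  intro hz hzU
  obtain ⟨w, hw1, hw2⟩ := mem_closure_iff.mp hz U hU hzU
  exact absurd (Set.eq_empty_iff_forall_notMem.mp h w ⟨hw2, hw1⟩) (fun h => h)

noncomputable section

/-- sup-extension of the orbit order isomorphism -/
noncomputable def Phi (rho rho' : G →* Equiv.Perm ℝ) (x₀ x : ℝ) : ℝ :=
  sSup ((fun g : G => rho' g x₀) '' {g : G | rho g x₀ ≤ x})

noncomputable def gapL (rho : G →* Equiv.Perm ℝ) (x₀ x : ℝ) : ℝ :=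
  sSup (closure (orbitSet rho x₀) ∩ Set.Iic x)

noncomputable def gapR (rho : G →* Equiv.Perm ℝ) (x₀ x : ℝ) : ℝ :=
  sInf (closure (orbitSet rho x₀) ∩ Set.Ici x)

noncomputable def c0 (rho : G →* Equiv.Perm ℝ) (x₀ : ℝ) : ℝ :=
  sInf (closure (orbitSet rho x₀) ∩ Set.Ioi x₀)

noncomputable def aff (x₀ c c' y : ℝ) : ℝ := x₀ + (y - x₀) * ((c' - x₀) / (c - x₀))

open Classical in
noncomputable def hmap (rho rho' : G →* Equiv.Perm ℝ) (x₀ x : ℝ) : ℝ :=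
  if x ∈ closure (orbitSet rho x₀) then Phi rho rho' x₀ x
  else
    rho' (Function.invFun (fun g : G => rho g x₀) (gapL rho x₀ x))
      (aff x₀ (c0 rho x₀) (c0 rho' x₀)
        (rho (Function.invFun (fun g : G => rho g x₀) (gapL rho x₀ x))⁻¹ x))

lemma aff_base (x₀ c c' : ℝ) : aff x₀ c c' x₀ = x₀ := by simp [aff]

lemma aff_strictMono {x₀ c c' : ℝ} (hc : x₀ < c) (hc' : x₀ < c') :
    StrictMono (aff x₀ c c') := by
  intro a b hab
  have hpos : 0 < (c' - x₀) / (c - x₀) := div_pos (by linarith) (by linarith)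
  unfold aff
  nlinarith

lemma aff_mem {x₀ c c' : ℝ} (hc : x₀ < c) (hc' : x₀ < c') {y : ℝ}
    (hy : y ∈ Set.Ioo x₀ c) : aff x₀ c c' y ∈ Set.Ioo x₀ c' := by
  obtain ⟨h1, h2⟩ := hy
  have hpos : 0 < (c' - x₀) / (c - x₀) := div_pos (by linarith) (by linarith)
  constructor
  · unfold aff; nlinarith
  · have h3 : (y - x₀) * ((c' - x₀) / (c - x₀)) < (c - x₀) * ((c' - x₀) / (c - x₀)) :=
      mul_lt_mul_of_pos_right (by linarith) hpos
    have h4 : (c - x₀) * ((c' - x₀) / (c - x₀)) = c' - x₀ :=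
      mul_div_cancel₀ _ (by linarith)
    unfold aff; linarith

lemma aff_inv {x₀ c c' : ℝ} (hc : x₀ < c) (hc' : x₀ < c') (y : ℝ) :
    aff x₀ c' c (aff x₀ c c' y) = y := by
  unfold aff
  have h1 : c - x₀ ≠ 0 := by linarith
  have h2 : c' - x₀ ≠ 0 := by linarith
  field_simp
  ring

variable (rho rho')

lemma PhiSet_nonempty (H : Good rho rho' x₀) (x : ℝ) :
    ((fun g : G => rho' g x₀) '' {g : G | rho g x₀ ≤ x}).Nonempty := by
  obtain ⟨g, hg⟩ := exists_orbit_lt H x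
  exact ⟨rho' g x₀, g, hg.le, rfl⟩

lemma PhiSet_bddAbove (H : Good rho rho' x₀) (x : ℝ) :
    BddAbove ((fun g : G => rho' g x₀) '' {g : G | rho g x₀ ≤ x}) := by
  obtain ⟨g₀, hg₀⟩ := exists_orbit_gt H x
  refine ⟨rho' g₀ x₀, ?_⟩
  rintro y ⟨f, hf, rfl⟩
  exact ((H.lt_iff f g₀).mp (lt_of_le_of_lt hf hg₀)).le

lemma Phi_orbit (H : Good rho rho' x₀) (g : G) :
    Phi rho rho' x₀ (rho g x₀) = rho' g x₀ := by
  apply le_antisymm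
  · apply csSup_le (PhiSet_nonempty rho rho' H _)
    rintro y ⟨f, hf, rfl⟩
    exact (H.hpq f g).mp hf
  · exact le_csSup (PhiSet_bddAbove rho rho' H _) ⟨g, by simp, rfl⟩

lemma Phi_mono (H : Good rho rho' x₀) : Monotone (Phi rho rho' x₀) := by
  intro a b hab
  apply csSup_le_csSup (PhiSet_bddAbove rho rho' H b) (PhiSet_nonempty rho rho' H a)
  rintro y ⟨f, hf, rfl⟩
  exact ⟨f, le_trans hf hab, rfl⟩

lemma Phi_mem_closure (H : Good rho rho' x₀) (x : ℝ) :
    Phi rho rho' x₀ x ∈ closure (orbitSet rho' x₀) := by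
  apply closure_mono (show ((fun g : G => rho' g x₀) '' {g : G | rho g x₀ ≤ x}) ⊆
    orbitSet rho' x₀ by rintro y ⟨f, -, rfl⟩; exact ⟨f, rfl⟩)
  exact csSup_mem_closure (PhiSet_nonempty rho rho' H x) (PhiSet_bddAbove rho rho' H x)

/-- no-collapse: the sup-extension stays strictly below orbit points strictly to the right -/
lemma Phi_lt (H : Good rho rho' x₀) {x : ℝ} {a : G} (hxa : x < rho a x₀) :
    Phi rho rho' x₀ x < rho' a x₀ := by
  have hub : Phi rho rho' x₀ x ≤ rho' a x₀ := by
    apply csSup_le (PhiSet_nonempty rho rho' H x)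
    rintro y ⟨f, hf, rfl⟩
    exact ((H.lt_iff f a).mp (lt_of_le_of_lt hf hxa)).le
  rcases lt_or_eq_of_le hub with h | h
  · exact h
  exfalso
  by_cases hmid : ∃ g : G, x < rho g x₀ ∧ rho g x₀ < rho a x₀
  · obtain ⟨g, hg1, hg2⟩ := hmid
    have : Phi rho rho' x₀ x ≤ rho' g x₀ := by
      apply csSup_le (PhiSet_nonempty rho rho' H x)
      rintro y ⟨f, hf, rfl⟩
      exact ((H.lt_iff f g).mp (lt_of_le_of_lt hf hg1)).le
    have := lt_of_le_of_lt this ((H.lt_iff g a).mp hg2)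
    rw [h] at this; exact lt_irrefl _ this
  · push_neg at hmid
    set u := sSup (closure (orbitSet rho x₀) ∩ Set.Iic x) with hu
    have hne : (closure (orbitSet rho x₀) ∩ Set.Iic x).Nonempty := by
      obtain ⟨g, hg⟩ := exists_orbit_lt H x
      exact ⟨rho g x₀, subset_closure ⟨g, rfl⟩, hg.le⟩
    have hbdd : BddAbove (closure (orbitSet rho x₀) ∩ Set.Iic x) :=
      ⟨x, fun z hz => hz.2⟩
    have humem : u ∈ closure (orbitSet rho x₀) ∩ Set.Iic x :=
      (isClosed_closure.inter isClosed_Iic).csSup_mem hne hbdd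
    -- the interval [u, rho a x₀] meets the closure only in endpoints
    have hgap : orbitSet rho x₀ ∩ Set.Ioo x (rho a x₀) = ∅ := by
      ext z
      simp only [mem_inter_iff, mem_empty_iff_false, iff_false, not_and]
      rintro ⟨g, rfl⟩ hz
      exact absurd hz.2 (not_lt.mpr (hmid g hz.1))
    have hcgap := closure_inter_open_empty isOpen_Ioo hgap
    have hicc : closure (orbitSet rho x₀) ∩ Set.Icc u (rho a x₀) = {u, rho a x₀} := by
      ext z
      simp only [mem_inter_iff, mem_Icc, mem_insert_iff, mem_singleton_iff]
      constructor
      · rintro ⟨hz, hz1, hz2⟩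
        rcases le_or_gt z x with hzx | hzx
        · exact Or.inl (le_antisymm (le_csSup hbdd ⟨hz, hzx⟩) hz1)
        · rcases lt_or_eq_of_le hz2 with hlt | heq
          · exact absurd (Set.eq_empty_iff_forall_notMem.mp hcgap z ⟨hz, hzx, hlt⟩)
              (fun hh => hh)
          · exact Or.inr heq
      · rintro (rfl | rfl)
        · exact ⟨humem.1, le_rfl, le_trans humem.2 hxa.le⟩
        · exact ⟨subset_closure ⟨a, rfl⟩, le_trans humem.2 hxa.le, le_rfl⟩
    obtain ⟨hu_orb, -⟩ := H.ht3 u (rho a x₀) (lt_of_le_of_lt humem.2 hxa) hicc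
    obtain ⟨e, he0⟩ := hu_orb
    have he : rho e x₀ = u := he0
    -- q e is both ≤ Phi x and an upper bound, so Phi x = q e, contradiction with e = a
    have h1 : rho' e x₀ ≤ Phi rho rho' x₀ x := by
      apply le_csSup (PhiSet_bddAbove rho rho' H x)
      refine ⟨e, ?_, rfl⟩
      simp only [Set.mem_setOf_eq, he]
      exact humem.2
    have h2 : rho' e x₀ = rho' a x₀ := le_antisymm (by rw [← h]; exact h1) (by
      rw [← h]
      apply csSup_le (PhiSet_nonempty rho rho' H x)
      rintro y ⟨f, hf, rfl⟩
      apply (H.hpq f e).mp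
      rw [he]
      exact le_csSup hbdd ⟨subset_closure ⟨f, rfl⟩, hf⟩)
    have hea : e = a := H.hqinj h2
    rw [hea] at he
    rw [he] at hxa
    exact absurd hxa (not_lt.mpr humem.2)

lemma Phi_comp (H : Good rho rho' x₀) {x : ℝ} (hx : x ∈ closure (orbitSet rho x₀)) :
    Phi rho' rho x₀ (Phi rho rho' x₀ x) = x := by
  apply le_antisymm
  · apply csSup_le (PhiSet_nonempty rho' rho H.symm _)
    rintro y ⟨f, hf, rfl⟩
    simp only [Set.mem_setOf_eq] at hf
    by_contra hcon
    push_neg at hcon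
    exact absurd hf (not_le.mpr (Phi_lt rho rho' H hcon))
  · have hbdd2 : BddAbove ((fun g : G => rho g x₀) ''
        {g : G | rho' g x₀ ≤ Phi rho rho' x₀ x}) := by
      refine ⟨x, ?_⟩
      rintro y ⟨f, hf, rfl⟩
      simp only [Set.mem_setOf_eq] at hf
      by_contra hcon
      push_neg at hcon
      exact absurd hf (not_le.mpr (Phi_lt rho rho' H hcon))
    have hsub : ((fun g : G => rho g x₀) '' {g : G | rho g x₀ ≤ x}) ⊆
        ((fun g : G => rho g x₀) '' {g : G | rho' g x₀ ≤ Phi rho rho' x₀ x}) := by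
      rintro y ⟨f, hf, rfl⟩
      exact ⟨f, le_csSup (PhiSet_bddAbove rho rho' H x) ⟨f, hf, rfl⟩, rfl⟩
    have hne1 : ((fun g : G => rho g x₀) '' {g : G | rho g x₀ ≤ x}).Nonempty := by
      obtain ⟨g, hg⟩ := exists_orbit_lt H x
      exact ⟨rho g x₀, g, hg.le, rfl⟩
    have h1 : sSup ((fun g : G => rho g x₀) '' {g : G | rho g x₀ ≤ x}) ≤
        Phi rho' rho x₀ (Phi rho rho' x₀ x) := csSup_le_csSup hbdd2 hne1 hsub
    set u := sSup ((fun g : G => rho g x₀) '' {g : G | rho g x₀ ≤ x}) with hu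
    have hbdd1 : BddAbove ((fun g : G => rho g x₀) '' {g : G | rho g x₀ ≤ x}) := by
      refine ⟨x, ?_⟩; rintro y ⟨f, hf, rfl⟩; exact hf
    have humem : u ∈ closure (orbitSet rho x₀) := by
      apply closure_mono (show ((fun g : G => rho g x₀) '' {g : G | rho g x₀ ≤ x}) ⊆
        orbitSet rho x₀ by rintro y ⟨f, -, rfl⟩; exact ⟨f, rfl⟩)
      exact csSup_mem_closure hne1 hbdd1
    have hux : u ≤ x := csSup_le hne1 (by rintro y ⟨f, hf, rfl⟩; exact hf)
    rcases eq_or_lt_of_le hux with heq | hlt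
    · rw [heq] at h1; exact h1
    · exfalso
      have hicc : closure (orbitSet rho x₀) ∩ Set.Icc u x = {u, x} := by
        ext z
        simp only [Set.mem_inter_iff, Set.mem_Icc, Set.mem_insert_iff,
          Set.mem_singleton_iff]
        constructor
        · rintro ⟨hz, hz1, hz2⟩
          rcases eq_or_lt_of_le hz2 with heq | hzx
          · exact Or.inr heq
          left
          by_contra hne
          have huz : u < z := lt_of_le_of_ne hz1 (Ne.symm hne)
          obtain ⟨w, hw1, hw2⟩ := mem_closure_iff.mp hz (Set.Ioo u x) isOpen_Ioo ⟨huz, hzx⟩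
          obtain ⟨e, he⟩ := hw2
          have he' : rho e x₀ = w := he
          have : rho e x₀ ≤ u := le_csSup hbdd1 ⟨e, by
            simp only [Set.mem_setOf_eq, he']; exact hw1.2.le, rfl⟩
          rw [he'] at this
          exact absurd hw1.1 (not_lt.mpr this)
        · rintro (rfl | rfl)
          · exact ⟨humem, le_rfl, hux⟩
          · exact ⟨hx, hux, le_rfl⟩
      obtain ⟨-, hx_orb⟩ := H.ht3 u x hlt hicc
      obtain ⟨e, he⟩ := hx_orb
      have he' : rho e x₀ = x := he
      have : rho e x₀ ≤ u := le_csSup hbdd1 ⟨e, by simp [he'], rfl⟩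
      rw [he'] at this
      exact absurd hlt (not_lt.mpr this)

lemma Phi_equiv (H : Good rho rho' x₀) (g : G) (x : ℝ) :
    Phi rho rho' x₀ (rho g x) = rho' g (Phi rho rho' x₀ x) := by
  have key : ∀ y : ℝ, rho g⁻¹ y ≤ x ↔ y ≤ rho g x := by
    intro y
    rw [← (H.hm g).le_iff_le, rho_apply_inv]
  have hset : {f : G | rho f x₀ ≤ rho g x} = (fun f => g * f) '' {f : G | rho f x₀ ≤ x} := by
    ext f
    simp only [Set.mem_setOf_eq, Set.mem_image]
    constructor
    · intro hf
      refine ⟨g⁻¹ * f, ?_, by group⟩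
      show rho (g⁻¹ * f) x₀ ≤ x
      rw [rho_mul_apply]
      exact (key _).mpr hf
    · rintro ⟨f', hf', rfl⟩
      rw [rho_mul_apply]
      exact le_trans ((H.hm g).monotone hf') le_rfl
  have himg : (fun f : G => rho' f x₀) '' ((fun f => g * f) '' {f : G | rho f x₀ ≤ x}) =
      (rho' g) '' ((fun f : G => rho' f x₀) '' {f : G | rho f x₀ ≤ x}) := by
    rw [Set.image_image, Set.image_image]
    apply Set.image_congr
    intro f _
    rw [rho_mul_apply]
  have := (oIso rho' H.hm' g).map_csSup'
    (PhiSet_nonempty rho rho' H x) (PhiSet_bddAbove rho rho' H x)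
  unfold Phi
  rw [hset, himg]
  exact this.symm

section GapLemmas

variable {rho rho'}
variable (H : Good rho rho' x₀) {x : ℝ} (hx : x ∉ closure (orbitSet rho x₀))

include H hx

lemma gapL_isGreatest :
    IsGreatest (closure (orbitSet rho x₀) ∩ Set.Iic x) (gapL rho x₀ x) := by
  have hne : (closure (orbitSet rho x₀) ∩ Set.Iic x).Nonempty := by
    obtain ⟨g, hg⟩ := exists_orbit_lt H x
    exact ⟨rho g x₀, subset_closure ⟨g, rfl⟩, hg.le⟩
  have hbdd : BddAbove (closure (orbitSet rho x₀) ∩ Set.Iic x) := ⟨x, fun z hz => hz.2⟩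
  exact ⟨(isClosed_closure.inter isClosed_Iic).csSup_mem hne hbdd,
    fun z hz => le_csSup hbdd hz⟩

lemma gapL_lt : gapL rho x₀ x < x := by
  rcases lt_or_eq_of_le (show gapL rho x₀ x ≤ x from (gapL_isGreatest H hx).1.2) with h | h
  · exact h
  · exact absurd ((h ▸ (gapL_isGreatest H hx).1.1) : x ∈ closure (orbitSet rho x₀)) hx

lemma gapR_isLeast :
    IsLeast (closure (orbitSet rho x₀) ∩ Set.Ici x) (gapR rho x₀ x) := by
  have hne : (closure (orbitSet rho x₀) ∩ Set.Ici x).Nonempty := by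
    obtain ⟨g, hg⟩ := exists_orbit_gt H x
    exact ⟨rho g x₀, subset_closure ⟨g, rfl⟩, hg.le⟩
  have hbdd : BddBelow (closure (orbitSet rho x₀) ∩ Set.Ici x) := ⟨x, fun z hz => hz.2⟩
  exact ⟨(isClosed_closure.inter isClosed_Ici).csInf_mem hne hbdd,
    fun z hz => csInf_le hbdd hz⟩

lemma gapR_gt : x < gapR rho x₀ x := by
  rcases lt_or_eq_of_le (show x ≤ gapR rho x₀ x from (gapR_isLeast H hx).1.2) with h | h
  · exact h
  · exact absurd ((h.symm ▸ (gapR_isLeast H hx).1.1) : x ∈ closure (orbitSet rho x₀)) hx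

lemma gap_Ioo_empty :
    closure (orbitSet rho x₀) ∩ Set.Ioo (gapL rho x₀ x) (gapR rho x₀ x) = ∅ := by
  ext z
  simp only [Set.mem_inter_iff, Set.mem_Ioo, Set.mem_empty_iff_false, iff_false]
  rintro ⟨hz, h1, h2⟩
  rcases le_or_gt z x with hzx | hzx
  · exact absurd ((gapL_isGreatest H hx).2 ⟨hz, hzx⟩) (not_le.mpr h1)
  · exact absurd ((gapR_isLeast H hx).2 ⟨hz, hzx.le⟩) (not_le.mpr h2)

lemma gap_mem_orbit :
    gapL rho x₀ x ∈ orbitSet rho x₀ ∧ gapR rho x₀ x ∈ orbitSet rho x₀ := by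
  apply H.ht3 _ _ (lt_trans (gapL_lt H hx) (gapR_gt H hx))
  ext z
  simp only [Set.mem_inter_iff, Set.mem_Icc, Set.mem_insert_iff, Set.mem_singleton_iff]
  constructor
  · rintro ⟨hz, hz1, hz2⟩
    rcases eq_or_lt_of_le hz1 with heq | h1
    · exact Or.inl heq.symm
    rcases eq_or_lt_of_le hz2 with heq | h2
    · exact Or.inr heq
    exact absurd (Set.eq_empty_iff_forall_notMem.mp (gap_Ioo_empty H hx) z ⟨hz, h1, h2⟩)
      (fun h => h)
  · rintro (rfl | rfl)
    · exact ⟨(gapL_isGreatest H hx).1.1, le_rfl, (lt_trans (gapL_lt H hx) (gapR_gt H hx)).le⟩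
    · exact ⟨(gapR_isLeast H hx).1.1, (lt_trans (gapL_lt H hx) (gapR_gt H hx)).le, le_rfl⟩

lemma c0_spec :
    x₀ < c0 rho x₀ ∧ c0 rho x₀ ∈ orbitSet rho x₀ ∧
      closure (orbitSet rho x₀) ∩ Set.Ioo x₀ (c0 rho x₀) = ∅ ∧
      (∀ f : G, rho f x₀ = gapL rho x₀ x → gapR rho x₀ x = rho f (c0 rho x₀)) := by
  obtain ⟨⟨f₁, hf₁0⟩, ⟨g₁, hg₁0⟩⟩ := gap_mem_orbit H hx
  have hf₁ : rho f₁ x₀ = gapL rho x₀ x := hf₁0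
  have hg₁ : rho g₁ x₀ = gapR rho x₀ x := hg₁0
  set a := gapL rho x₀ x
  set b := gapR rho x₀ x
  have hab : a < b := lt_trans (gapL_lt H hx) (gapR_gt H hx)
  set b' := rho f₁⁻¹ b with hb'
  have hb'mem : b' ∈ closure (orbitSet rho x₀) :=
    (mem_closure_iff_apply H f₁⁻¹ b).mpr (gapR_isLeast H hx).1.1
  have hx₀a : rho f₁⁻¹ a = x₀ := by rw [← hf₁, rho_inv_apply]
  have hx₀b' : x₀ < b' := by
    rw [← hx₀a]
    exact (H.hm f₁⁻¹) hab
  have hIoo : closure (orbitSet rho x₀) ∩ Set.Ioo x₀ b' = ∅ := by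
    ext z
    simp only [Set.mem_inter_iff, Set.mem_Ioo, Set.mem_empty_iff_false, iff_false]
    rintro ⟨hz, h1, h2⟩
    have hz1 : rho f₁ z ∈ closure (orbitSet rho x₀) := (mem_closure_iff_apply H f₁ z).mpr hz
    have hz2 : a < rho f₁ z := by
      have h := (H.hm f₁) h1
      rwa [hf₁] at h
    have hz3 : rho f₁ z < b := by
      have := (H.hm f₁) h2
      rwa [hb', rho_apply_inv] at this
    exact absurd (Set.eq_empty_iff_forall_notMem.mp (gap_Ioo_empty H hx) (rho f₁ z)
      ⟨hz1, hz2, hz3⟩) (fun h => h)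
  have hleast : IsLeast (closure (orbitSet rho x₀) ∩ Set.Ioi x₀) b' := by
    refine ⟨⟨hb'mem, hx₀b'⟩, fun z hz => ?_⟩
    by_contra hcon
    push_neg at hcon
    exact absurd (Set.eq_empty_iff_forall_notMem.mp hIoo z ⟨hz.1, hz.2, hcon⟩)
      (fun h => h)
  have hc0 : c0 rho x₀ = b' := hleast.csInf_eq
  refine ⟨by rw [hc0]; exact hx₀b', ?_, by rw [hc0]; exact hIoo, ?_⟩
  · rw [hc0, hb', ← hg₁, ← rho_mul_apply]
    exact ⟨f₁⁻¹ * g₁, rfl⟩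
  · intro f hf
    have hff : f = f₁ := H.hpinj (show rho f x₀ = rho f₁ x₀ by rw [hf, hf₁])
    rw [hff, hc0, hb', rho_apply_inv]

lemma c0'_spec :
    x₀ < c0 rho' x₀ ∧
      closure (orbitSet rho' x₀) ∩ Set.Ioo x₀ (c0 rho' x₀) = ∅ ∧
      (∀ g : G, rho g x₀ = c0 rho x₀ → rho' g x₀ = c0 rho' x₀) := by
  obtain ⟨h1, ⟨g₀, hg₀0⟩, h3, -⟩ := c0_spec H hx
  have hg₀ : rho g₀ x₀ = c0 rho x₀ := hg₀0
  have hp1 : rho (1 : G) x₀ = x₀ := by rw [map_one]; rfl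
  have hq1 : rho' (1 : G) x₀ = x₀ := by rw [map_one]; rfl
  have hq : x₀ < rho' g₀ x₀ := by
    have h := (H.lt_iff 1 g₀).mp (by rw [hp1, hg₀]; exact h1)
    rwa [hq1] at h
  have hA' : orbitSet rho' x₀ ∩ Set.Ioo x₀ (rho' g₀ x₀) = ∅ := by
    ext z
    simp only [Set.mem_inter_iff, Set.mem_Ioo, Set.mem_empty_iff_false, iff_false]
    rintro ⟨⟨e, he0⟩, hz1, hz2⟩
    have he : rho' e x₀ = z := he0
    have hpe1 : x₀ < rho e x₀ := by
      have h := (H.lt_iff 1 e).mpr (by rw [hq1, he]; exact hz1)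
      rwa [hp1] at h
    have hpe2 : rho e x₀ < c0 rho x₀ := by
      rw [← hg₀]
      exact (H.lt_iff e g₀).mpr (by rw [he]; exact hz2)
    exact absurd (Set.eq_empty_iff_forall_notMem.mp h3 (rho e x₀)
      ⟨subset_closure ⟨e, rfl⟩, hpe1, hpe2⟩) (fun h => h)
  have hcA' := closure_inter_open_empty isOpen_Ioo hA'
  have hleast : IsLeast (closure (orbitSet rho' x₀) ∩ Set.Ioi x₀) (rho' g₀ x₀) := by
    refine ⟨⟨subset_closure ⟨g₀, rfl⟩, hq⟩, fun z hz => ?_⟩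
    by_contra hcon
    push_neg at hcon
    exact absurd (Set.eq_empty_iff_forall_notMem.mp hcA' z ⟨hz.1, hz.2, hcon⟩)
      (fun h => h)
  have hc0' : c0 rho' x₀ = rho' g₀ x₀ := hleast.csInf_eq
  refine ⟨by rw [hc0']; exact hq, by rw [hc0']; exact hcA', ?_⟩
  intro g hg
  have : g = g₀ := H.hpinj (show rho g x₀ = rho g₀ x₀ by rw [hg, hg₀])
  rw [this, hc0']

end GapLemmas

variable {rho rho'}

lemma hmap_closure {x : ℝ} (hx : x ∈ closure (orbitSet rho x₀)) :
    hmap rho rho' x₀ x = Phi rho rho' x₀ x := by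
  unfold hmap; rw [if_pos hx]

lemma hmap_gap (H : Good rho rho' x₀) {x : ℝ} (hx : x ∉ closure (orbitSet rho x₀)) :
    ∃ f : G, rho f x₀ = gapL rho x₀ x ∧
      hmap rho rho' x₀ x = rho' f (aff x₀ (c0 rho x₀) (c0 rho' x₀) (rho f⁻¹ x)) ∧
      rho' f x₀ < hmap rho rho' x₀ x ∧
      hmap rho rho' x₀ x < rho' f (c0 rho' x₀) ∧
      rho' f (c0 rho' x₀) = Phi rho rho' x₀ (gapR rho x₀ x) ∧
      closure (orbitSet rho' x₀) ∩ Set.Ioo (rho' f x₀) (rho' f (c0 rho' x₀)) = ∅ := by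
  obtain ⟨hc0pos, ⟨g₀, hg₀0⟩, hIoo, hbrel⟩ := c0_spec H hx
  have hg₀ : rho g₀ x₀ = c0 rho x₀ := hg₀0
  obtain ⟨hc0'pos, hIoo', hcorr⟩ := c0'_spec H hx
  have hgmem := (gap_mem_orbit H hx).1
  set f := Function.invFun (fun g : G => rho g x₀) (gapL rho x₀ x) with hfdef
  have hf : rho f x₀ = gapL rho x₀ x := Function.invFun_eq hgmem
  have hb : gapR rho x₀ x = rho f (c0 rho x₀) := hbrel f hf
  have hxy : rho f⁻¹ x ∈ Set.Ioo x₀ (c0 rho x₀) := by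
    constructor
    · have h := (H.hm f⁻¹) (show rho f x₀ < x by rw [hf]; exact gapL_lt H hx)
      rwa [rho_inv_apply] at h
    · have h := (H.hm f⁻¹) (show x < rho f (c0 rho x₀) by rw [← hb]; exact gapR_gt H hx)
      rwa [rho_inv_apply] at h
  have haffmem := aff_mem hc0pos hc0'pos hxy
  have hval : hmap rho rho' x₀ x =
      rho' f (aff x₀ (c0 rho x₀) (c0 rho' x₀) (rho f⁻¹ x)) := by
    unfold hmap
    rw [if_neg hx, ← hfdef]
  have hlow : rho' f x₀ < hmap rho rho' x₀ x := by
    rw [hval]; exact (H.hm' f) haffmem.1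
  have hhigh : hmap rho rho' x₀ x < rho' f (c0 rho' x₀) := by
    rw [hval]; exact (H.hm' f) haffmem.2
  have hc0' : rho' g₀ x₀ = c0 rho' x₀ := hcorr g₀ hg₀
  have hq : rho' (f * g₀) x₀ = rho' f (c0 rho' x₀) := by rw [rho_mul_apply, hc0']
  have hp : rho (f * g₀) x₀ = gapR rho x₀ x := by rw [rho_mul_apply, hg₀, ← hb]
  have hPhib : rho' f (c0 rho' x₀) = Phi rho rho' x₀ (gapR rho x₀ x) := by
    rw [← hq, ← hp]
    exact (Phi_orbit rho rho' H (f * g₀)).symm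
  have hgapA' : orbitSet rho' x₀ ∩ Set.Ioo (rho' f x₀) (rho' f (c0 rho' x₀)) = ∅ := by
    ext z
    simp only [Set.mem_inter_iff, Set.mem_Ioo, Set.mem_empty_iff_false, iff_false]
    rintro ⟨⟨e, he0⟩, h1, h2⟩
    have he : rho' e x₀ = z := he0
    have hp1 : rho f x₀ < rho e x₀ := (H.lt_iff f e).mpr (by rw [he]; exact h1)
    have hp2 : rho e x₀ < rho (f * g₀) x₀ := (H.lt_iff e (f * g₀)).mpr
      (by rw [he, hq]; exact h2)
    rw [hf] at hp1
    rw [hp] at hp2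
    exact absurd (Set.eq_empty_iff_forall_notMem.mp (gap_Ioo_empty H hx) (rho e x₀)
      ⟨subset_closure ⟨e, rfl⟩, hp1, hp2⟩) (fun h => h)
  exact ⟨f, hf, hval, hlow, hhigh, hPhib,
    closure_inter_open_empty isOpen_Ioo hgapA'⟩

lemma hmap_mono (H : Good rho rho' x₀) : Monotone (hmap rho rho' x₀) := by
  intro x y hxy
  rcases eq_or_lt_of_le hxy with rfl | hlt
  · exact le_rfl
  by_cases hxc : x ∈ closure (orbitSet rho x₀) <;>
    by_cases hyc : y ∈ closure (orbitSet rho x₀)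
  · rw [hmap_closure hxc, hmap_closure hyc]
    exact Phi_mono rho rho' H hxy
  · obtain ⟨f, hf, hval, hlow, hhigh, hPhib, hgap'⟩ := hmap_gap H hyc
    have hxa : x ≤ gapL rho x₀ y := by
      by_contra hcon; push_neg at hcon
      exact absurd (Set.eq_empty_iff_forall_notMem.mp (gap_Ioo_empty H hyc) x
        ⟨hxc, hcon, lt_trans hlt (gapR_gt H hyc)⟩) (fun h => h)
    rw [hmap_closure hxc]
    have h1 : Phi rho rho' x₀ x ≤ Phi rho rho' x₀ (rho f x₀) :=
      Phi_mono rho rho' H (by rw [hf]; exact hxa)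
    rw [Phi_orbit rho rho' H] at h1
    exact le_of_lt (lt_of_le_of_lt h1 hlow)
  · obtain ⟨f, hf, hval, hlow, hhigh, hPhib, hgap'⟩ := hmap_gap H hxc
    have hby : gapR rho x₀ x ≤ y := by
      by_contra hcon; push_neg at hcon
      exact absurd (Set.eq_empty_iff_forall_notMem.mp (gap_Ioo_empty H hxc) y
        ⟨hyc, lt_trans (gapL_lt H hxc) hlt, hcon⟩) (fun h => h)
    rw [hmap_closure hyc]
    apply le_of_lt
    apply lt_of_lt_of_le hhigh
    rw [hPhib]
    exact Phi_mono rho rho' H hby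
  · obtain ⟨f, hf, hval, hlow, hhigh, hPhib, -⟩ := hmap_gap H hxc
    obtain ⟨f', hf', hval', hlow', hhigh', hPhib', -⟩ := hmap_gap H hyc
    by_cases hsame : gapL rho x₀ x = gapL rho x₀ y
    · have hff : f = f' := H.hpinj (show rho f x₀ = rho f' x₀ by rw [hf, hf', hsame])
      have hc0pos := (c0_spec H hxc).1
      have hc0'pos := (c0'_spec H hxc).1
      rw [hval, hval', ← hff]
      apply le_of_lt
      apply (H.hm' f)
      apply aff_strictMono hc0pos hc0'pos
      exact (H.hm f⁻¹) hlt
    · have hry : gapR rho x₀ x ≤ y := by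
        by_contra hcon; push_neg at hcon
        have hyL : gapL rho x₀ y = gapL rho x₀ x := by
          apply IsGreatest.csSup_eq
          constructor
          · exact ⟨(gapL_isGreatest H hxc).1.1, (lt_trans (gapL_lt H hxc) hlt).le⟩
          · intro z hz
            by_contra hzc; push_neg at hzc
            exact absurd (Set.eq_empty_iff_forall_notMem.mp (gap_Ioo_empty H hxc) z
              ⟨hz.1, hzc, lt_of_le_of_lt hz.2 hcon⟩) (fun h => h)
        exact hsame hyL.symm
      have hLa : gapR rho x₀ x ≤ gapL rho x₀ y := by
        by_contra hcon; push_neg at hcon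
        exact absurd (Set.eq_empty_iff_forall_notMem.mp (gap_Ioo_empty H hyc)
          (gapR rho x₀ x) ⟨(gapR_isLeast H hxc).1.1, hcon,
            lt_of_le_of_lt hry (gapR_gt H hyc)⟩) (fun h => h)
      have h1 : hmap rho rho' x₀ x < Phi rho rho' x₀ (gapR rho x₀ x) := by
        rw [← hPhib]; exact hhigh
      have h2 : Phi rho rho' x₀ (gapR rho x₀ x) ≤ Phi rho rho' x₀ (rho f' x₀) := by
        rw [hf']; exact Phi_mono rho rho' H hLa
      rw [Phi_orbit rho rho' H] at h2
      exact le_of_lt (lt_of_lt_of_le h1 (le_trans h2 hlow'.le))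

lemma hmap_comp (H : Good rho rho' x₀) (x : ℝ) :
    hmap rho' rho x₀ (hmap rho rho' x₀ x) = x := by
  by_cases hxc : x ∈ closure (orbitSet rho x₀)
  · rw [hmap_closure hxc, hmap_closure (Phi_mem_closure rho rho' H x)]
    exact Phi_comp rho rho' H hxc
  · obtain ⟨f, hf, hval, hlow, hhigh, hPhib, hgap'⟩ := hmap_gap H hxc
    have hc0pos := (c0_spec H hxc).1
    have hc0'pos := (c0'_spec H hxc).1
    have hnotc : hmap rho rho' x₀ x ∉ closure (orbitSet rho' x₀) := by
      intro hmem
      exact absurd (Set.eq_empty_iff_forall_notMem.mp hgap' _ ⟨hmem, hlow, hhigh⟩)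
        (fun h => h)
    obtain ⟨f2, hf2, hval2, -, -, -, -⟩ := hmap_gap H.symm hnotc
    have hgl : gapL rho' x₀ (hmap rho rho' x₀ x) = rho' f x₀ := by
      apply IsGreatest.csSup_eq
      constructor
      · exact ⟨subset_closure ⟨f, rfl⟩, hlow.le⟩
      · intro z hz
        by_contra hzc; push_neg at hzc
        exact absurd (Set.eq_empty_iff_forall_notMem.mp hgap' z
          ⟨hz.1, hzc, lt_of_le_of_lt hz.2 hhigh⟩) (fun h => h)
    have hff : f2 = f := H.hqinj (show rho' f2 x₀ = rho' f x₀ by rw [hf2, hgl])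
    rw [hval2, hff, hval, rho_inv_apply rho', aff_inv hc0pos hc0'pos, rho_apply_inv]

lemma hmap_base (H : Good rho rho' x₀) : hmap rho rho' x₀ x₀ = x₀ := by
  have h0 : x₀ ∈ orbitSet rho x₀ := ⟨1, by simp⟩
  rw [hmap_closure (subset_closure h0)]
  have h := Phi_orbit rho rho' H 1
  simpa using h

lemma hmap_equiv (H : Good rho rho' x₀) (g : G) (x : ℝ) :
    hmap rho rho' x₀ (rho g x) = rho' g (hmap rho rho' x₀ x) := by
  by_cases hxc : x ∈ closure (orbitSet rho x₀)
  · rw [hmap_closure ((mem_closure_iff_apply H g x).mpr hxc), hmap_closure hxc]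
    exact Phi_equiv rho rho' H g x
  · have hgxc : rho g x ∉ closure (orbitSet rho x₀) := fun h =>
      hxc ((mem_closure_iff_apply H g x).mp h)
    obtain ⟨f, hf, hval, hlow, hhigh, -, -⟩ := hmap_gap H hxc
    obtain ⟨f2, hf2, hval2, -, -, -, -⟩ := hmap_gap H hgxc
    have hgl : gapL rho x₀ (rho g x) = rho g (gapL rho x₀ x) := by
      apply IsGreatest.csSup_eq
      constructor
      · refine ⟨(mem_closure_iff_apply H g _).mpr (gapL_isGreatest H hxc).1.1, ?_⟩
        exact (H.hm g).monotone (gapL_lt H hxc).le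
      · intro z hz
        have h1 : rho g⁻¹ z ∈ closure (orbitSet rho x₀) :=
          (mem_closure_iff_apply H g⁻¹ z).mpr hz.1
        have h2 : rho g⁻¹ z ≤ x := by
          have h := (H.hm g⁻¹).monotone hz.2
          rwa [rho_inv_apply] at h
        have h3 : rho g⁻¹ z ≤ gapL rho x₀ x := (gapL_isGreatest H hxc).2 ⟨h1, h2⟩
        have h4 := (H.hm g).monotone h3
        rwa [rho_apply_inv] at h4
    have hff : f2 = g * f := H.hpinj (show rho f2 x₀ = rho (g * f) x₀ by
      rw [hf2, hgl, ← hf, ← rho_mul_apply])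
    have harg : rho (g * f)⁻¹ (rho g x) = rho f⁻¹ x := by
      rw [show (g * f)⁻¹ = f⁻¹ * g⁻¹ by group, rho_mul_apply, rho_inv_apply]
    rw [hval2, hff, harg, hval, rho_mul_apply]

end
end DynRealAux

/-- uniqueness of the dynamical realization up to conjugacy. Two actions
of `G` on `ℝ` by orientation-preserving homeomorphisms which are both tight at `x₀` and
both realize the same left order `λ` at `x₀` are conjugate by an orientation-preserving
homeomorphism of `ℝ` fixing `x₀`. -/
theorem dynamical_realization_unique_up_to_conjugacy
    {G : Type*} [Group G] [Countable G] (lam : LeftOrder G) (x₀ : ℝ)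
    (rho rho' : G →* Equiv.Perm ℝ)
    (hmono : ∀ g : G, StrictMono ⇑(rho g)) (hmono' : ∀ g : G, StrictMono ⇑(rho' g))
    (htight : IsTightAt rho x₀) (htight' : IsTightAt rho' x₀)
    (hreal : RealizesAt rho x₀ lam) (hreal' : RealizesAt rho' x₀ lam) :
    ∃ h : Equiv.Perm ℝ, StrictMono ⇑h ∧ h x₀ = x₀ ∧
      ∀ (g : G) (x : ℝ), h (rho g x) = rho' g (h x) := by
  classical
  obtain ⟨hstab, hbb, hba, ht3⟩ := htight
  obtain ⟨hstab', hbb', hba', ht3'⟩ := htight'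
  have hlt : ∀ f g : G, rho f x₀ < rho g x₀ ↔ rho' f x₀ < rho' g x₀ := fun f g =>
    (hreal f g).symm.trans (hreal' f g)
  have hpq : ∀ f g : G, rho f x₀ ≤ rho g x₀ ↔ rho' f x₀ ≤ rho' g x₀ := by
    intro f g
    rw [← not_lt, ← not_lt, hlt g f]
  have hpinj : Function.Injective fun g : G => rho g x₀ := by
    intro f g hfg
    simp only at hfg
    have h2 : rho (g⁻¹ * f) x₀ = x₀ := by
      rw [DynRealAux.rho_mul_apply, hfg, DynRealAux.rho_inv_apply]
    have h3 := hstab _ h2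
    have h4 : g⁻¹ * f = g⁻¹ * g := by rw [h3]; group
    exact mul_left_cancel h4
  have hqinj : Function.Injective fun g : G => rho' g x₀ := by
    intro f g hfg
    simp only at hfg
    have h2 : rho' (g⁻¹ * f) x₀ = x₀ := by
      rw [DynRealAux.rho_mul_apply, hfg, DynRealAux.rho_inv_apply]
    have h3 := hstab' _ h2
    have h4 : g⁻¹ * f = g⁻¹ * g := by rw [h3]; group
    exact mul_left_cancel h4
  have H : DynRealAux.Good rho rho' x₀ :=
    ⟨hmono, hmono', hbb, hba, hbb', hba', ht3, ht3', hpq, hpinj, hqinj⟩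
  refine ⟨⟨DynRealAux.hmap rho rho' x₀, DynRealAux.hmap rho' rho x₀,
    DynRealAux.hmap_comp H, DynRealAux.hmap_comp H.symm⟩, ?_, ?_, ?_⟩
  · show StrictMono (DynRealAux.hmap rho rho' x₀)
    exact (DynRealAux.hmap_mono H).strictMono_of_injective
      (Function.LeftInverse.injective (DynRealAux.hmap_comp H))
  · exact DynRealAux.hmap_base H
  · intro g x
    exact DynRealAux.hmap_equiv H g x
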